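/- Let p ∈ [1, ∞) and assume each r_i is lower semicontinuous with respect to weak convergence in L^p(Ω; ℝ). Let 𝐗 be a set-valued portfolio whose efficient part ∂⁺𝐗(ω) = {x ∈ 𝐗(ω) : there is no y ∈ 𝐗(ω) with y ≥ x and y ≠ x} is a.s. nonempty and Effros-measurable, satisfies 𝐗(ω) ⊆ ∂⁺𝐗(ω) + ℝ₋^d a.s., and is p-integrably bounded, i.e. sup{‖x‖ : x ∈ ∂⁺𝐗(ω)} ≤ ζ(ω) a.s. for some ζ ∈ L^p(Ω; ℝ). Then ρ_{s,0}(𝐗) is a closed subset of ℝ^d. -/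

import Mathlib

open MeasureTheory Set Filter
open scoped Pointwise ENNReal RealInnerProductSpace

set_option maxHeartbeats 1000000
set_option synthInstance.maxHeartbeats 100000

noncomputable section

/-- `ℝ^d` with the Euclidean norm. -/
abbrev Vec (d : ℕ) := EuclideanSpace ℝ (Fin d)

/-- Effros measurability of a set-valued map: `{ω : X(ω) ∩ G ≠ ∅}` is measurable
for every open `G`. -/
def EffrosMeasurable {Ω : Type*} [MeasurableSpace Ω] {d : ℕ} (X : Ω → Set (Vec d)) : Prop :=
  ∀ G : Set (Vec d), IsOpen G → MeasurableSet {ω | (X ω ∩ G).Nonempty}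

/-- A set-valued portfolio: an Effros-measurable map with nonempty closed convex
lower-set values. -/
structure IsPortfolio {Ω : Type*} [MeasurableSpace Ω] {d : ℕ} (X : Ω → Set (Vec d)) : Prop where
  effros : EffrosMeasurable X
  nonempty : ∀ ω, (X ω).Nonempty
  isClosed : ∀ ω, IsClosed (X ω)
  convex : ∀ ω, Convex ℝ (X ω)
  lower : ∀ ω, ∀ x ∈ X ω, ∀ y : Vec d, (∀ i, y i ≤ x i) → y ∈ X ω

/-- A coherent risk measure on `L^p(Ω; ℝ)` with values in `ℝ ∪ {+∞} ⊆ EReal`: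
monotone (antitone in the gain), cash invariant, subadditive and positively homogeneous. -/
structure IsCoherent {Ω : Type*} [MeasurableSpace Ω] (μ : Measure Ω) (p : ℝ≥0∞)
    (r : (Ω → ℝ) → EReal) : Prop where
  ne_bot : ∀ ξ : Ω → ℝ, MemLp ξ p μ → r ξ ≠ ⊥
  mono : ∀ ξ η : Ω → ℝ, MemLp ξ p μ → MemLp η p μ → (∀ᵐ ω ∂μ, ξ ω ≤ η ω) → r η ≤ r ξ
  cash : ∀ ξ : Ω → ℝ, MemLp ξ p μ → ∀ c : ℝ, r (fun ω => ξ ω + c) = r ξ - (c : EReal)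
  subadd : ∀ ξ η : Ω → ℝ, MemLp ξ p μ → MemLp η p μ →
    r (fun ω => ξ ω + η ω) ≤ r ξ + r η
  homog : ∀ ξ : Ω → ℝ, MemLp ξ p μ → ∀ c : ℝ, 0 < c →
    r (fun ω => c * ξ ω) = (c : EReal) * r ξ

/-- The selection risk measure `ρ_{s,0}(𝐗)`: the set of deterministic `x ∈ ℝ^d`
for which `𝐗 + x` has a selection with all individually acceptable components. -/
def rho0 {Ω : Type*} [MeasurableSpace Ω] (μ : Measure Ω) (p : ℝ≥0∞) {d : ℕ}
    (r : Fin d → (Ω → ℝ) → EReal) (X : Ω → Set (Vec d)) : Set (Vec d) :=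
  {x | ∃ ξ : Ω → Vec d, MemLp ξ p μ ∧ (∀ᵐ ω ∂μ, ξ ω ∈ X ω) ∧
        ∀ i, r i (fun ω => ξ ω i + x i) ≤ 0}

/-- Lower semicontinuity of a risk measure with respect to weak convergence in
`L^p(Ω; ℝ)` (test functions in `L^q`). -/
def WeakLSC {Ω : Type*} [MeasurableSpace Ω] (μ : Measure Ω) (p q : ℝ≥0∞)
    (r : (Ω → ℝ) → EReal) : Prop :=
  ∀ (ξ : ℕ → Ω → ℝ) (ξ₀ : Ω → ℝ), (∀ n, MemLp (ξ n) p μ) → MemLp ξ₀ p μ →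
    (∀ ζ : Ω → ℝ, MemLp ζ q μ →
      Tendsto (fun n => ∫ ω, ξ n ω * ζ ω ∂μ) atTop (nhds (∫ ω, ξ₀ ω * ζ ω ∂μ))) →
    r ξ₀ ≤ liminf (fun n => r (ξ n)) atTop

/-- The efficient part `∂⁺𝐗(ω)` of a set-valued portfolio: points of `𝐗(ω)` that are
not dominated coordinatewise by any other point of `𝐗(ω)`. -/
def effPart {Ω : Type*} {d : ℕ} (X : Ω → Set (Vec d)) (ω : Ω) : Set (Vec d) :=
  {x ∈ X ω | ∀ y ∈ X ω, (∀ i, x i ≤ y i) → y = x}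

open scoped Topology

section Hilbert
variable {H : Type*} [NormedAddCommGroup H] [InnerProductSpace ℝ H] [CompleteSpace H]

lemma exists_weak_subseq (v : ℕ → H) (B : ℝ) (hB : ∀ n, ‖v n‖ ≤ B) :
    ∃ φ : ℕ → ℕ, StrictMono φ ∧ ∃ v₀ : H,
      ∀ w : H, Tendsto (fun n => ⟪v (φ n), w⟫) atTop (𝓝 ⟪v₀, w⟫) := by
  have hB0 : 0 ≤ B := (norm_nonneg (v 0)).trans (hB 0)
  have hIcc : ∀ n, (fun m => ⟪v n, v m⟫ : ℕ → ℝ) ∈ Set.univ.pi fun _ => Set.Icc (-(B*B)) (B*B) := by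
    intro n m _
    have h1 : |⟪v n, v m⟫| ≤ B * B :=
      (abs_real_inner_le_norm _ _).trans
        (mul_le_mul (hB n) (hB m) (norm_nonneg _) hB0)
    exact abs_le.1 h1
  obtain ⟨L, -, φ, hφ, hL⟩ :=
    ((isCompact_univ_pi fun _ : ℕ => isCompact_Icc).tendsto_subseq hIcc :)
  have hLm : ∀ m, Tendsto (fun n => ⟪v (φ n), v m⟫) atTop (𝓝 (L m)) := by
    rw [tendsto_pi_nhds] at hL; exact hL
  set K := (Submodule.span ℝ (Set.range v)).topologicalClosure with hKdef
  have hvK : ∀ n, v n ∈ K := fun n =>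
    Submodule.le_topologicalClosure _ (Submodule.subset_span ⟨n, rfl⟩)
  have hspan : ∀ z ∈ Submodule.span ℝ (Set.range v),
      ∃ l, Tendsto (fun n => ⟪v (φ n), z⟫) atTop (𝓝 l) := by
    intro z hz
    induction hz using Submodule.span_induction with
    | mem x hx => obtain ⟨m, rfl⟩ := hx; exact ⟨L m, hLm m⟩
    | zero => exact ⟨0, by simpa using (tendsto_const_nhds : Tendsto (fun _ : ℕ => (0:ℝ)) atTop _)⟩
    | add x y _ _ hx hy =>
        obtain ⟨l1, h1⟩ := hx; obtain ⟨l2, h2⟩ := hy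
        exact ⟨l1 + l2, by simpa [inner_add_right] using h1.add h2⟩
    | smul c x _ hx =>
        obtain ⟨l, h⟩ := hx
        exact ⟨c * l, by simpa [real_inner_smul_right] using h.const_mul c⟩
  have hKlim : ∀ w ∈ K, ∃ l, Tendsto (fun n => ⟪v (φ n), w⟫) atTop (𝓝 l) := by
    intro w hw
    have hcauchy : CauchySeq (fun n => ⟪v (φ n), w⟫) := by
      rw [Metric.cauchySeq_iff]
      intro ε hε
      have hwc : w ∈ closure ((Submodule.span ℝ (Set.range v) : Submodule ℝ H) : Set H) := by
        rw [← Submodule.topologicalClosure_coe]; exact hw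
      have hδ : (0:ℝ) < ε / (4 * B + 4) := by positivity
      obtain ⟨z, hz, hdist⟩ := Metric.mem_closure_iff.1 hwc _ hδ
      obtain ⟨l, hl⟩ := hspan z hz
      have hcz : CauchySeq (fun n => ⟪v (φ n), z⟫) := hl.cauchySeq
      rw [Metric.cauchySeq_iff] at hcz
      obtain ⟨N, hN⟩ := hcz (ε/2) (by positivity)
      refine ⟨N, fun m hm n hn => ?_⟩
      have hinner : ∀ k, |⟪v (φ k), w - z⟫| ≤ B * (ε / (4 * B + 4)) := by
        intro k
        refine (abs_real_inner_le_norm _ _).trans ?_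
        have : ‖w - z‖ ≤ ε / (4 * B + 4) := by
          rw [← dist_eq_norm]; exact hdist.le
        exact mul_le_mul (hB _) this (norm_nonneg _) hB0
      have hsplit : ∀ k, ⟪v (φ k), w⟫ = ⟪v (φ k), z⟫ + ⟪v (φ k), w - z⟫ := by
        intro k; rw [← inner_add_right]; congr 1; abel
      have hd := hN m hm n hn
      rw [Real.dist_eq] at hd ⊢
      rw [hsplit m, hsplit n]
      have hBε : B * (ε / (4 * B + 4)) ≤ ε / 4 := by
        rw [← mul_div_assoc, div_le_div_iff₀ (by positivity) (by norm_num)]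
        nlinarith
      have heq : ⟪v (φ m), z⟫ + ⟪v (φ m), w - z⟫ - (⟪v (φ n), z⟫ + ⟪v (φ n), w - z⟫)
          = (⟪v (φ m), z⟫ - ⟪v (φ n), z⟫) + (⟪v (φ m), w - z⟫ - ⟪v (φ n), w - z⟫) := by ring
      rw [heq]
      have h2 := abs_add_le (⟪v (φ m), z⟫ - ⟪v (φ n), z⟫) (⟪v (φ m), w - z⟫ - ⟪v (φ n), w - z⟫)
      have h3 := abs_sub (⟪v (φ m), w - z⟫) (⟪v (φ n), w - z⟫)
      have := hinner m; have := hinner n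
      nlinarith [hd]
    exact cauchySeq_tendsto_of_complete hcauchy
  haveI : CompleteSpace K := (Submodule.isClosed_topologicalClosure _).completeSpace_coe
  have key : ∀ w : H, ∃ l, Tendsto (fun n => ⟪v (φ n), w⟫) atTop (𝓝 l) := by
    intro w
    obtain ⟨l, hl⟩ := hKlim ((K.orthogonalProjectionOnto w : K) : H) (K.orthogonalProjectionOnto w).2
    refine ⟨l, ?_⟩
    have heq : ∀ n, ⟪v (φ n), w⟫ = ⟪v (φ n), ((K.orthogonalProjectionOnto w : K) : H)⟫ := by
      intro n
      have h1 : ⟪v (φ n), w - ((K.orthogonalProjectionOnto w : K) : H)⟫ = 0 :=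
        Submodule.inner_right_of_mem_orthogonal (hvK (φ n))
          (K.sub_starProjection_mem_orthogonal w)
      rw [inner_sub_right] at h1
      linarith
    simp only [heq]; exact hl
  choose l hl using key
  have hadd : ∀ w₁ w₂, l (w₁ + w₂) = l w₁ + l w₂ := fun w₁ w₂ =>
    tendsto_nhds_unique (hl (w₁ + w₂))
      (by simpa [inner_add_right] using (hl w₁).add (hl w₂))
  have hsmul : ∀ (c : ℝ) w, l (c • w) = c * l w := fun c w =>
    tendsto_nhds_unique (hl (c • w))
      (by simpa [real_inner_smul_right] using (hl w).const_mul c)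
  have hbound : ∀ w, ‖l w‖ ≤ B * ‖w‖ := by
    intro w
    have hev : ∀ n, |⟪v (φ n), w⟫| ≤ B * ‖w‖ := fun n =>
      (abs_real_inner_le_norm _ _).trans
        (mul_le_mul_of_nonneg_right (hB _) (norm_nonneg _))
    rw [Real.norm_eq_abs]
    exact le_of_tendsto ((hl w).abs) (Eventually.of_forall hev)
  let T : H →ₗ[ℝ] ℝ :=
    { toFun := l, map_add' := hadd, map_smul' := hsmul }
  let Tc : H →L[ℝ] ℝ := T.mkContinuous B hbound
  refine ⟨φ, hφ, (InnerProductSpace.toDual ℝ H).symm Tc, fun w => ?_⟩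
  rw [InnerProductSpace.toDual_symm_apply]
  exact hl w

lemma mem_closure_convexHull_of_weak (u : ℕ → H) (u₀ : H)
    (h : ∀ w : H, Tendsto (fun n => ⟪u n, w⟫) atTop (𝓝 ⟪u₀, w⟫)) :
    u₀ ∈ closure (convexHull ℝ (Set.range u)) := by
  by_contra hc
  obtain ⟨f, s, hfs, hsf⟩ := geometric_hahn_banach_closed_point
    ((convex_convexHull ℝ _).closure) isClosed_closure hc
  set w := (InnerProductSpace.toDual ℝ H).symm f with hw
  have hfw : ∀ x, f x = ⟪w, x⟫ := fun x => (InnerProductSpace.toDual_symm_apply).symm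
  have hlim : Tendsto (fun n => f (u n)) atTop (𝓝 (f u₀)) := by
    simp only [hfw]
    simpa [real_inner_comm] using h w
  have hle : f u₀ ≤ s :=
    le_of_tendsto hlim (Eventually.of_forall fun n =>
      (hfs _ (subset_closure (subset_convexHull ℝ _ ⟨n, rfl⟩))).le)
  exact absurd hsf (not_lt.2 hle)

end Hilbert

section Aux

variable {Ω : Type*} [MeasurableSpace Ω] {μ : Measure Ω} {d : ℕ}

lemma Vec.abs_coord_le {d : ℕ} (y : Vec d) (i : Fin d) : |y i| ≤ ‖y‖ := by
  rw [EuclideanSpace.norm_eq, ← Real.sqrt_sq_eq_abs]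
  apply Real.sqrt_le_sqrt
  have h : |y i| ^ 2 ≤ ∑ j, ‖y j‖ ^ 2 := by
    rw [show |y i| ^ 2 = ‖y i‖ ^ 2 by rw [Real.norm_eq_abs]]
    exact Finset.single_le_sum (f := fun j => ‖y j‖ ^ 2) (fun j _ => by positivity)
      (Finset.mem_univ i)
  simpa using h

lemma Vec.norm_le_sqrt_mul {d : ℕ} (y : Vec d) {c : ℝ} (hc : 0 ≤ c)
    (h : ∀ i, |y i| ≤ c) : ‖y‖ ≤ Real.sqrt d * c := by
  rw [EuclideanSpace.norm_eq]
  have h1 : ∑ j, ‖y j‖ ^ 2 ≤ (d : ℝ) * c ^ 2 := by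
    calc ∑ j, ‖y j‖ ^ 2 ≤ ∑ _j : Fin d, c ^ 2 := by
          refine Finset.sum_le_sum fun j _ => ?_
          rw [Real.norm_eq_abs]
          exact pow_le_pow_left₀ (abs_nonneg _) (h j) 2
      _ = (d : ℝ) * c ^ 2 := by simp [mul_comm]
  calc Real.sqrt (∑ j, ‖y j‖ ^ 2) ≤ Real.sqrt ((d : ℝ) * c ^ 2) := Real.sqrt_le_sqrt h1
    _ = Real.sqrt d * c := by
        rw [Real.sqrt_mul (Nat.cast_nonneg d), Real.sqrt_sq hc]

lemma aesm_of_coords {f : Ω → Vec d} (h : ∀ i, AEMeasurable (fun ω => f ω i) μ) :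
    AEStronglyMeasurable f μ := by
  rw [aestronglyMeasurable_iff_aemeasurable]
  have h' : ∀ i, ∃ g : Ω → ℝ, Measurable g ∧ (fun ω => f ω i) =ᵐ[μ] g := fun i => h i
  choose g hgm hge using h'
  refine ⟨fun ω => (WithLp.toLp 2 (fun i => g i ω) : Vec d), (PiLp.continuous_toLp 2 _).measurable.comp (measurable_pi_iff.2 hgm), ?_⟩
  filter_upwards [MeasureTheory.ae_all_iff.2 hge] with ω hω
  ext i; exact hω i

lemma memℒp_coord {p : ℝ≥0∞} {F : Ω → Vec d} (hF : MemLp F p μ) (i : Fin d) :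
    MemLp (fun ω => F ω i) p μ := by
  refine MemLp.of_le hF ?_ (Eventually.of_forall fun ω => ?_)
  · exact aestronglyMeasurable_iff_aemeasurable.2
      ((PiLp.continuous_apply 2 _ i).measurable.comp_aemeasurable hF.aestronglyMeasurable.aemeasurable)
  · simpa [Real.norm_eq_abs] using Vec.abs_coord_le (F ω) i

lemma Lp.coeFn_finset_sum {E : Type*} [NormedAddCommGroup E] {p : ℝ≥0∞} {ι : Type*}
    (s : Finset ι) (F : ι → Lp E p μ) :
    (↑↑(∑ j ∈ s, F j) : Ω → E) =ᵐ[μ] fun ω => ∑ j ∈ s, (↑↑(F j) : Ω → E) ω := by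
  classical
  induction s using Finset.induction_on with
  | empty => simpa [Pi.zero_def] using MeasureTheory.Lp.coeFn_zero E p μ
  | insert a s' hj ih =>
    rw [Finset.sum_insert hj]
    filter_upwards [MeasureTheory.Lp.coeFn_add (F a) (∑ j ∈ s', F j), ih] with ω h1 h2
    simp only [Finset.sum_insert hj]
    rw [h1]
    simp only [Pi.add_apply, h2]

end Aux

/-- Theorem 3.2: if `∂⁺𝐗` is `p`-integrably bounded (with `p ∈ [1, ∞)` and each `r_i`
weakly lower semicontinuous), then `ρ_{s,0}(𝐗)` is closed. -/
theorem statement4 {Ω : Type*} [MeasurableSpace Ω] (μ : Measure Ω) [IsProbabilityMeasure μ]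
    [μ.IsComplete] {d : ℕ} (p q : ℝ≥0∞) (hp1 : 1 ≤ p) (hptop : p ≠ ∞)
    (hpq : 1/p + 1/q = 1)
    (r : Fin d → (Ω → ℝ) → EReal) (hr : ∀ i, IsCoherent μ p (r i))
    (hlsc : ∀ i, WeakLSC μ p q (r i))
    (X : Ω → Set (Vec d)) (hX : IsPortfolio X)
    (hsel : ∃ ξ : Ω → Vec d, MemLp ξ p μ ∧ ∀ᵐ ω ∂μ, ξ ω ∈ X ω)
    (hne : ∀ᵐ ω ∂μ, (effPart X ω).Nonempty)
    (hmeas : EffrosMeasurable (effPart X))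
    (hdom : ∀ᵐ ω ∂μ, ∀ x ∈ X ω, ∃ y ∈ effPart X ω, ∀ i, x i ≤ y i)
    (ζ : Ω → ℝ) (hζ : MemLp ζ p μ)
    (hbd : ∀ᵐ ω ∂μ, ∀ x ∈ effPart X ω, ‖x‖ ≤ ζ ω) :
    IsClosed (rho0 μ p r X) := by
  classical
  -- exponent facts
  have hp0 : p ≠ 0 := fun h => by simp [h] at hp1
  have hpr1 : (1:ℝ) ≤ p.toReal := by
    have h := ENNReal.toReal_mono hptop hp1
    simpa using h
  have hq1 : 1 ≤ q := by
    rcases eq_or_ne q ∞ with hq | hq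
    · simp [hq, le_top]
    have hq0 : q ≠ 0 := by
      intro h0
      rw [h0] at hpq
      rw [ENNReal.div_zero one_ne_zero] at hpq
      simp at hpq
    have h1 : 1 / q ≤ 1 := by
      calc 1/q ≤ 1/p + 1/q := le_add_self
        _ = 1 := hpq
    rw [ENNReal.div_le_iff hq0 hq] at h1
    simpa using h1
  have hpq1 : (1:ℝ≥0∞)/1 = 1/q + 1/p := by
    rw [add_comm, hpq]; norm_num
  -- measurable version of ζ
  obtain ⟨Z, hZsm, hZae⟩ : ∃ Z : Ω → ℝ, StronglyMeasurable Z ∧ ζ =ᵐ[μ] Z :=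
    ⟨hζ.aestronglyMeasurable.mk ζ, hζ.aestronglyMeasurable.stronglyMeasurable_mk,
      hζ.aestronglyMeasurable.ae_eq_mk⟩
  have hZmem : MemLp Z p μ := hζ.ae_eq hZae
  have hZm : Measurable Z := hZsm.measurable
  have hbd' : ∀ᵐ ω ∂μ, ∀ x ∈ effPart X ω, ‖x‖ ≤ Z ω := by
    filter_upwards [hbd, hZae] with ω h1 h2
    rw [← h2]; exact h1
  set pr := p.toReal with hprdef
  set ρ : Ω → ℝ := fun ω => 1 + |Z ω| with hρdef
  have hρ1 : ∀ ω, 1 ≤ ρ ω := fun ω => le_add_of_nonneg_right (abs_nonneg _)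
  have hρpos : ∀ ω, 0 < ρ ω := fun ω => lt_of_lt_of_le one_pos (hρ1 ω)
  have hρm : Measurable ρ := measurable_const.add hZm.abs
  have hρmem : MemLp ρ p μ := (memLp_const (1:ℝ)).add hZmem.abs
  have hZρ : ∀ ω, |Z ω| ≤ ρ ω := fun ω => le_add_of_nonneg_left zero_le_one
  set w' : Ω → ℝ := fun ω => ρ ω ^ (pr / 2 - 1) with hw'def
  have hw'pos : ∀ ω, 0 < w' ω := fun ω => Real.rpow_pos_of_pos (hρpos ω) _
  have hw'm : Measurable w' := by
    rw [hw'def]; fun_prop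
  set κ : Ω → ℝ := fun ω => Real.sqrt d * ρ ω ^ (pr / 2) with hκdef
  have hκ0 : ∀ ω, 0 ≤ κ ω :=
    fun ω => mul_nonneg (Real.sqrt_nonneg _) (Real.rpow_pos_of_pos (hρpos ω) _).le
  have hκm : Measurable κ := by
    rw [hκdef]; fun_prop
  have hρpr_int : Integrable (fun ω => ρ ω ^ pr) μ := by
    have h := hρmem.integrable_norm_rpow hp0 hptop
    refine h.congr (Eventually.of_forall fun ω => ?_)
    show ‖ρ ω‖ ^ pr = ρ ω ^ pr
    rw [Real.norm_eq_abs, abs_of_pos (hρpos ω)]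
  have hκ2 : MemLp κ 2 μ := by
    rw [memLp_two_iff_integrable_sq hκm.aestronglyMeasurable]
    have hsq : (fun ω => κ ω ^ 2) = fun ω => (d : ℝ) * ρ ω ^ pr := by
      funext ω
      rw [hκdef]
      simp only
      rw [mul_pow, Real.sq_sqrt (Nat.cast_nonneg d),
        ← Real.rpow_natCast (ρ ω ^ (pr/2)) 2, ← Real.rpow_mul (hρpos ω).le]
      norm_num
    rw [hsq]
    exact hρpr_int.const_mul _
  -- sequential closedness
  apply IsSeqClosed.isClosed
  intro x x₀ hx hxlim
  simp only [rho0, Set.mem_setOf_eq] at hx ⊢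
  choose ξ hξmem hξX hξr using hx
  -- the truncated selections
  set η : ℕ → Ω → Vec d := fun n ω => (WithLp.toLp 2 (fun i => max (ξ n ω i) (-|Z ω|)) : Vec d) with hηdef
  have hηcoord : ∀ n i, AEMeasurable (fun ω => η n ω i) μ := by
    intro n i
    exact ((PiLp.continuous_apply 2 _ i).measurable.comp_aemeasurable
      (hξmem n).aestronglyMeasurable.aemeasurable).max hZm.abs.neg.aemeasurable
  have hηsm : ∀ n, AEStronglyMeasurable (η n) μ := fun n => aesm_of_coords (hηcoord n)
  have hgood : ∀ᵐ ω ∂μ, ∀ n : ℕ,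
      η n ω ∈ X ω ∧ (∀ i, |η n ω i| ≤ |Z ω|) ∧ ∀ i, ξ n ω i ≤ η n ω i := by
    filter_upwards [MeasureTheory.ae_all_iff.2 hξX, hdom, hbd'] with ω hωX hωdom hωbd
    intro n
    obtain ⟨y, hyE, hyle⟩ := hωdom _ (hωX n)
    have hyζ : ‖y‖ ≤ Z ω := hωbd y hyE
    have hZ0 : 0 ≤ Z ω := (norm_nonneg _).trans hyζ
    have habs : |Z ω| = Z ω := abs_of_nonneg hZ0
    have hyabs : ∀ i, |y i| ≤ |Z ω| := fun i => (Vec.abs_coord_le y i).trans (by rw [habs]; exact hyζ)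
    have hup : ∀ i, y i ≤ |Z ω| := fun i => (le_abs_self _).trans (hyabs i)
    have hlow : ∀ i, -|Z ω| ≤ y i := fun i => neg_le_of_abs_le (hyabs i)
    have hηy : ∀ i, η n ω i ≤ y i := fun i => max_le (hyle i) (hlow i)
    exact ⟨hX.lower ω y hyE.1 _ hηy,
      fun i => abs_le.2 ⟨le_max_right _ _, (hηy i).trans (hup i)⟩,
      fun i => le_max_left _ _⟩
  have hsd : (0:ℝ) ≤ Real.sqrt d := Real.sqrt_nonneg _
  have hZd : MemLp (fun ω => Real.sqrt d * |Z ω|) p μ := hZmem.abs.const_mul _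
  have hηnorm : ∀ n, ∀ᵐ ω ∂μ, ‖η n ω‖ ≤ Real.sqrt d * |Z ω| := by
    intro n
    filter_upwards [hgood] with ω hω
    exact Vec.norm_le_sqrt_mul _ (abs_nonneg _) (hω n).2.1
  have hηmem : ∀ n, MemLp (η n) p μ := by
    intro n
    refine MemLp.of_le hZd (hηsm n) ?_
    filter_upwards [hηnorm n] with ω hω
    rwa [Real.norm_eq_abs, abs_mul, abs_of_nonneg hsd, abs_abs]
  -- the weighted functions
  set Θf : ℕ → Ω → Vec d := fun n ω => w' ω • η n ω with hΘfdef
  have hΘfsm : ∀ n, AEStronglyMeasurable (Θf n) μ :=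
    fun n => hw'm.aemeasurable.aestronglyMeasurable.smul (hηsm n)
  have hwκ : ∀ ω, w' ω * (Real.sqrt d * ρ ω) = κ ω := by
    intro ω
    rw [hw'def, hκdef]
    simp only
    have h1 : ρ ω ^ (pr/2 - 1) * ρ ω ^ (1:ℝ) = ρ ω ^ (pr/2) := by
      rw [← Real.rpow_add (hρpos ω)]; norm_num
    rw [Real.rpow_one] at h1
    calc ρ ω ^ (pr/2 - 1) * (Real.sqrt d * ρ ω)
        = Real.sqrt d * (ρ ω ^ (pr/2 - 1) * ρ ω) := by ring
      _ = Real.sqrt d * ρ ω ^ (pr/2) := by rw [h1]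
  have hΘfbd : ∀ n, ∀ᵐ ω ∂μ, ‖Θf n ω‖ ≤ κ ω := by
    intro n
    filter_upwards [hηnorm n] with ω hω
    calc ‖Θf n ω‖ = |w' ω| * ‖η n ω‖ := by
          rw [hΘfdef]; simp only; rw [norm_smul, Real.norm_eq_abs]
      _ ≤ w' ω * (Real.sqrt d * |Z ω|) := by
          rw [abs_of_pos (hw'pos ω)]
          exact mul_le_mul_of_nonneg_left hω (hw'pos ω).le
      _ ≤ w' ω * (Real.sqrt d * ρ ω) := by
          refine mul_le_mul_of_nonneg_left ?_ (hw'pos ω).le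
          exact mul_le_mul_of_nonneg_left (hZρ ω) hsd
      _ = κ ω := hwκ ω
  have hΘf2 : ∀ n, MemLp (Θf n) 2 μ := by
    intro n
    refine MemLp.of_le hκ2 (hΘfsm n) ?_
    filter_upwards [hΘfbd n] with ω h
    rwa [Real.norm_eq_abs, abs_of_nonneg (hκ0 ω)]
  set Θ : ℕ → Lp (Vec d) 2 μ := fun n => (hΘf2 n).toLp (Θf n) with hΘdef
  have hΘnorm : ∀ n, ‖Θ n‖ ≤ (eLpNorm κ 2 μ).toReal := by
    intro n
    rw [hΘdef]
    simp only
    rw [Lp.norm_toLp]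
    apply ENNReal.toReal_mono hκ2.2.ne
    apply eLpNorm_mono_ae
    filter_upwards [hΘfbd n] with ω h
    rwa [Real.norm_eq_abs, abs_of_nonneg (hκ0 ω)]
  obtain ⟨φ, hφ, Θ₀, hweak⟩ := exists_weak_subseq Θ _ hΘnorm
  set η₀ : Ω → Vec d := fun ω => (w' ω)⁻¹ • (↑↑Θ₀ : Ω → Vec d) ω with hη₀def
  have hΘ₀eq : ∀ ω, (↑↑Θ₀ : Ω → Vec d) ω = w' ω • η₀ ω := by
    intro ω
    rw [hη₀def]
    simp only
    rw [smul_inv_smul₀ (hw'pos ω).ne']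
  -- Mazur
  obtain ⟨ψ, hψmem, hψlim⟩ :=
    mem_closure_iff_seq_limit.1 (mem_closure_convexHull_of_weak _ _ hweak)
  set D : Ω → Set (Vec d) := fun ω => {z | z ∈ X ω ∧ ∀ i, |z i| ≤ |Z ω|} with hDdef
  have hDconv : ∀ ω, Convex ℝ (D ω) := by
    intro ω z hz u hu a b ha hb hab
    refine ⟨hX.convex ω hz.1 hu.1 ha hb hab, fun i => ?_⟩
    have h1 : (a • z + b • u) i = a * z i + b * u i := rfl
    rw [h1]
    calc |a * z i + b * u i| ≤ |a * z i| + |b * u i| := abs_add_le _ _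
      _ = a * |z i| + b * |u i| := by
          rw [abs_mul, abs_mul, abs_of_nonneg ha, abs_of_nonneg hb]
      _ ≤ a * |Z ω| + b * |Z ω| :=
          add_le_add (mul_le_mul_of_nonneg_left (hz.2 i) ha)
            (mul_le_mul_of_nonneg_left (hu.2 i) hb)
      _ = |Z ω| := by rw [← add_mul, hab, one_mul]
  have hDclosed : ∀ ω, IsClosed (D ω) := by
    intro ω
    have h1 : D ω = X ω ∩ ⋂ i, {z : Vec d | |z i| ≤ |Z ω|} := by
      ext z
      simp [hDdef, Set.mem_iInter]
    rw [h1]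
    refine (hX.isClosed ω).inter (isClosed_iInter fun i => ?_)
    have : Continuous fun z : Vec d => |z i| := (PiLp.continuous_apply 2 _ i).abs
    exact isClosed_le this continuous_const
  have hψpt : ∀ k, ∀ᵐ ω ∂μ, (↑↑(ψ k) : Ω → Vec d) ω ∈ w' ω • D ω := by
    intro k
    have hk := hψmem k
    rw [convexHull_eq] at hk
    obtain ⟨ι', t, cw, cz, hcw, hcw1, hcz, hsum⟩ := hk
    have hsum' : ∑ j ∈ t, cw j • cz j = ψ k := by
      rw [← Finset.centerMass_eq_of_sum_1 _ _ hcw1]; exact hsum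
    have hcoe1 : (↑↑(ψ k) : Ω → Vec d) =ᵐ[μ] fun ω => ∑ j ∈ t, cw j • (↑↑(cz j) : Ω → Vec d) ω := by
      have h1 := Lp.coeFn_finset_sum t (fun j => cw j • cz j)
      have h2 : ∀ᵐ ω ∂μ, ∀ j ∈ (t : Set ι'), (↑↑(cw j • cz j) : Ω → Vec d) ω = cw j • (↑↑(cz j) : Ω → Vec d) ω :=
        (MeasureTheory.ae_ball_iff t.countable_toSet).2 fun j _ => Lp.coeFn_smul (cw j) (cz j)
      rw [← hsum']
      filter_upwards [h1, h2] with ω hω1 hω2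
      rw [hω1]
      exact Finset.sum_congr rfl fun j hj => hω2 j (Finset.mem_coe.2 hj)
    have hczpt : ∀ j ∈ t, ∀ᵐ ω ∂μ, (↑↑(cz j) : Ω → Vec d) ω ∈ w' ω • D ω := by
      intro j hj
      obtain ⟨n, hn⟩ := hcz j hj
      rw [← hn]
      filter_upwards [(hΘf2 (φ n)).coeFn_toLp, hgood] with ω h1 h2
      refine Set.mem_of_eq_of_mem (h1 : _ = Θf (φ n) ω) ?_
      exact Set.smul_mem_smul_set (⟨(h2 (φ n)).1, (h2 (φ n)).2.1⟩ : η (φ n) ω ∈ D ω)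
    have hczpt' : ∀ j ∈ (t : Set ι'), ∀ᵐ ω ∂μ, (↑↑(cz j) : Ω → Vec d) ω ∈ w' ω • D ω :=
      fun j hj => hczpt j (Finset.mem_coe.1 hj)
    filter_upwards [hcoe1, (MeasureTheory.ae_ball_iff t.countable_toSet).2 hczpt'] with ω h1 h2
    rw [h1]
    exact Convex.sum_mem ((hDconv ω).smul _) hcw hcw1 fun j hj => h2 j (Finset.mem_coe.2 hj)
  -- a.e. convergent subsequence of the convex combinations
  have htm : TendstoInMeasure μ (fun k => (↑↑(ψ k) : Ω → Vec d)) atTop (↑↑Θ₀ : Ω → Vec d) := by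
    apply tendstoInMeasure_of_tendsto_eLpNorm (p := 2) (by norm_num)
      (fun k => Lp.aestronglyMeasurable _) (Lp.aestronglyMeasurable _)
    have heq : ∀ k, eLpNorm ((↑↑(ψ k) : Ω → Vec d) - ↑↑Θ₀) 2 μ = ENNReal.ofReal ‖ψ k - Θ₀‖ := by
      intro k
      rw [← eLpNorm_congr_ae (Lp.coeFn_sub (ψ k) Θ₀)]
      rw [Lp.norm_def, ENNReal.ofReal_toReal (Lp.eLpNorm_ne_top _)]
    simp only [heq]
    have h0 : Tendsto (fun k => ‖ψ k - Θ₀‖) atTop (𝓝 0) :=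
      tendsto_iff_norm_sub_tendsto_zero.1 hψlim
    simpa using ENNReal.tendsto_ofReal h0
  obtain ⟨ks, hksmono, haeconv⟩ := htm.exists_seq_tendsto_ae
  have hΘ₀pt : ∀ᵐ ω ∂μ, (↑↑Θ₀ : Ω → Vec d) ω ∈ w' ω • D ω := by
    filter_upwards [MeasureTheory.ae_all_iff.2 hψpt, haeconv] with ω hω hconv
    have hclosed : IsClosed (w' ω • D ω) := IsClosed.smul₀ (w' ω) (hDclosed ω)
    exact hclosed.mem_of_tendsto hconv (Eventually.of_forall fun j => hω (ks j))
  have hη₀D : ∀ᵐ ω ∂μ, η₀ ω ∈ D ω := by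
    filter_upwards [hΘ₀pt] with ω hω
    obtain ⟨u, hu, huw⟩ := hω
    have h1 : η₀ ω = u := by
      rw [hη₀def]
      simp only
      rw [← huw, inv_smul_smul₀ (hw'pos ω).ne']
    rw [h1]
    exact hu
  have hη₀X : ∀ᵐ ω ∂μ, η₀ ω ∈ X ω := by
    filter_upwards [hη₀D] with ω h; exact h.1
  have hη₀bd : ∀ᵐ ω ∂μ, ∀ i, |η₀ ω i| ≤ |Z ω| := by
    filter_upwards [hη₀D] with ω h; exact h.2
  have hη₀sm : AEStronglyMeasurable η₀ μ :=
    hw'm.inv.aemeasurable.aestronglyMeasurable.smul (Lp.aestronglyMeasurable Θ₀)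
  have hη₀coord : ∀ i, AEStronglyMeasurable (fun ω => η₀ ω i) μ := fun i =>
    aestronglyMeasurable_iff_aemeasurable.2
      ((PiLp.continuous_apply 2 _ i).measurable.comp_aemeasurable hη₀sm.aemeasurable)
  have hη₀mem : MemLp η₀ p μ := by
    refine MemLp.of_le hZd hη₀sm ?_
    filter_upwards [hη₀bd] with ω hω
    rw [Real.norm_eq_abs, abs_mul, abs_of_nonneg hsd, abs_abs]
    exact Vec.norm_le_sqrt_mul _ (abs_nonneg _) hω
  -- multiplication integrability from Hoelder
  have hmulInt : ∀ (F g : Ω → ℝ), MemLp F p μ → MemLp g q μ →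
      Integrable (fun ω => F ω * g ω) μ := by
    intro F g hF hg
    have h1 : MemLp (g • F) 1 μ := MemLp.smul hF hg (hpqr := ⟨by simpa [one_div] using hpq1.symm⟩)
    have h2 : Integrable (g • F) μ := memLp_one_iff_integrable.1 h1
    refine h2.congr (Eventually.of_forall fun ω => ?_)
    simp [Pi.smul_apply', smul_eq_mul, mul_comm]
  -- weak convergence of pairings
  have hpair : ∀ g : Ω → ℝ, MemLp g q μ → ∀ i : Fin d,
      Tendsto (fun n => ∫ ω, η (φ n) ω i * g ω ∂μ) atTop (𝓝 (∫ ω, η₀ ω i * g ω ∂μ)) := by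
    intro g hg i
    obtain ⟨G, hGsm, hGae⟩ : ∃ G : Ω → ℝ, StronglyMeasurable G ∧ g =ᵐ[μ] G :=
      ⟨hg.aestronglyMeasurable.mk g, hg.aestronglyMeasurable.stronglyMeasurable_mk,
        hg.aestronglyMeasurable.ae_eq_mk⟩
    have hGmem : MemLp G q μ := hg.ae_eq hGae
    have hGm : Measurable G := hGsm.measurable
    have hred : ∀ F : Ω → ℝ, (∫ ω, F ω * g ω ∂μ) = ∫ ω, F ω * G ω ∂μ := fun F =>
      integral_congr_ae (by filter_upwards [hGae] with ω h; rw [h])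
    have hgoal_eq1 : (fun n => ∫ ω, η (φ n) ω i * g ω ∂μ)
        = fun n => ∫ ω, η (φ n) ω i * G ω ∂μ := funext fun n => hred _
    rw [hgoal_eq1, hred]
    have hρG : Integrable (fun ω => ρ ω * |G ω|) μ := hmulInt ρ _ hρmem hGmem.abs
    have hSmeas : ∀ M : ℕ, MeasurableSet {ω | |G ω| ≤ (M:ℝ) ∧ ρ ω ≤ (M:ℝ)} := by
      intro M
      rw [Set.setOf_and]
      exact (measurableSet_le hGm.abs measurable_const).inter
        (measurableSet_le hρm measurable_const)
    have hbadm : ∀ M : ℕ, AEStronglyMeasurable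
        (fun ω => if |G ω| ≤ (M:ℝ) ∧ ρ ω ≤ (M:ℝ) then (0:ℝ) else ρ ω * |G ω|) μ := by
      intro M
      exact (Measurable.ite (hSmeas M) measurable_const
        (hρm.mul hGm.abs)).aestronglyMeasurable
    have hbadbd : ∀ M : ℕ, ∀ ω,
        ‖(if |G ω| ≤ (M:ℝ) ∧ ρ ω ≤ (M:ℝ) then (0:ℝ) else ρ ω * |G ω|)‖ ≤ ρ ω * |G ω| := by
      intro M ω
      rw [Real.norm_eq_abs]
      split
      · simp [mul_nonneg (hρpos ω).le (abs_nonneg (G ω))]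
      · rw [abs_of_nonneg (mul_nonneg (hρpos ω).le (abs_nonneg (G ω)))]
    have hbadint : ∀ M : ℕ, Integrable
        (fun ω => if |G ω| ≤ (M:ℝ) ∧ ρ ω ≤ (M:ℝ) then (0:ℝ) else ρ ω * |G ω|) μ :=
      fun M => hρG.mono' (hbadm M) (Eventually.of_forall (hbadbd M))
    have he0 : Tendsto (fun M : ℕ =>
        ∫ ω, (if |G ω| ≤ (M:ℝ) ∧ ρ ω ≤ (M:ℝ) then (0:ℝ) else ρ ω * |G ω|) ∂μ)
        atTop (𝓝 0) := by
      have h := MeasureTheory.tendsto_integral_of_dominated_convergence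
        (F := fun (M : ℕ) ω => if |G ω| ≤ (M:ℝ) ∧ ρ ω ≤ (M:ℝ) then (0:ℝ) else ρ ω * |G ω|)
        (f := fun _ => (0:ℝ)) (bound := fun ω => ρ ω * |G ω|) hbadm hρG
        (fun M => Eventually.of_forall (hbadbd M)) ?_
      · simpa using h
      · refine Eventually.of_forall fun ω => ?_
        have hev : ∀ᶠ M : ℕ in atTop,
            (if |G ω| ≤ (M:ℝ) ∧ ρ ω ≤ (M:ℝ) then (0:ℝ) else ρ ω * |G ω|) = 0 := by
          filter_upwards [eventually_ge_atTop ⌈max |G ω| (ρ ω)⌉₊] with M hM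
          have hc : (max |G ω| (ρ ω)) ≤ (M:ℝ) := (Nat.le_ceil _).trans (Nat.cast_le.2 hM)
          exact if_pos ⟨(le_max_left _ _).trans hc, (le_max_right _ _).trans hc⟩
        exact Tendsto.congr' (hev.mono fun M h => h.symm) tendsto_const_nhds
    have hGM2 : ∀ M : ℕ, MemLp (fun ω =>
        (if |G ω| ≤ (M:ℝ) ∧ ρ ω ≤ (M:ℝ) then G ω * ρ ω ^ (1 - pr/2) else 0) •
          EuclideanSpace.single i (1:ℝ)) 2 μ := by
      intro M
      have hscm : Measurable (fun ω =>
          if |G ω| ≤ (M:ℝ) ∧ ρ ω ≤ (M:ℝ) then G ω * ρ ω ^ (1 - pr/2) else (0:ℝ)) := by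
        refine Measurable.ite (hSmeas M) ?_ measurable_const
        fun_prop
      have hsm : AEStronglyMeasurable (fun ω =>
          (if |G ω| ≤ (M:ℝ) ∧ ρ ω ≤ (M:ℝ) then G ω * ρ ω ^ (1 - pr/2) else (0:ℝ)) •
            EuclideanSpace.single i (1:ℝ)) μ :=
        hscm.aemeasurable.aestronglyMeasurable.smul aestronglyMeasurable_const
      refine MemLp.of_le (memLp_const ((M:ℝ) * ((M:ℝ)+1))) hsm ?_
      refine Eventually.of_forall fun ω => ?_
      have hns : ‖EuclideanSpace.single i (1:ℝ)‖ = 1 := by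
        rw [EuclideanSpace.norm_single, norm_one]
      rw [norm_smul, hns, mul_one, Real.norm_eq_abs, Real.norm_eq_abs]
      rw [abs_of_nonneg (by positivity : (0:ℝ) ≤ (M:ℝ) * ((M:ℝ)+1))]
      split
      · rename_i hcnd
        obtain ⟨hG1, hρ2⟩ := hcnd
        have hM1 : (1:ℝ) ≤ (M:ℝ) := (hρ1 ω).trans hρ2
        have hre : ρ ω ^ (1 - pr/2) ≤ (M:ℝ) + 1 := by
          rcases le_or_gt 0 (1 - pr/2) with he | he
          · have h1 : ρ ω ^ (1 - pr/2) ≤ (M:ℝ) ^ (1 - pr/2) :=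
              Real.rpow_le_rpow (hρpos ω).le hρ2 he
            have h2 : (M:ℝ) ^ (1 - pr/2) ≤ (M:ℝ) ^ (1:ℝ) :=
              Real.rpow_le_rpow_of_exponent_le hM1 (by linarith)
            rw [Real.rpow_one] at h2
            linarith
          · have h1 : ρ ω ^ (1 - pr/2) ≤ 1 :=
              Real.rpow_le_one_of_one_le_of_nonpos (hρ1 ω) he.le
            linarith
        calc |G ω * ρ ω ^ (1 - pr/2)| = |G ω| * |ρ ω ^ (1 - pr/2)| := abs_mul _ _
          _ = |G ω| * ρ ω ^ (1 - pr/2) := by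
              rw [abs_of_pos (Real.rpow_pos_of_pos (hρpos ω) _)]
          _ ≤ (M:ℝ) * ((M:ℝ) + 1) := by
              refine mul_le_mul hG1 hre (Real.rpow_pos_of_pos (hρpos ω) _).le ?_
              positivity
      · simp
        positivity
    set W : ℕ → Lp (Vec d) 2 μ := fun M => (hGM2 M).toLp _ with hWdef
    have hinner : ∀ (T : Lp (Vec d) 2 μ) (F : Ω → Vec d),
        ((↑↑T : Ω → Vec d) =ᵐ[μ] fun ω => w' ω • F ω) → ∀ M : ℕ,
        (⟪T, W M⟫ : ℝ) = ∫ ω, (if |G ω| ≤ (M:ℝ) ∧ ρ ω ≤ (M:ℝ) then F ω i * G ω else 0) ∂μ := by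
      intro T F hT M
      rw [MeasureTheory.L2.inner_def]
      apply integral_congr_ae
      filter_upwards [hT, (hGM2 M).coeFn_toLp] with ω h1 h2
      rw [h1, h2]
      rw [real_inner_smul_right]
      have hsingle : ⟪w' ω • F ω, EuclideanSpace.single i (1:ℝ)⟫ = w' ω * F ω i := by
        simp [PiLp.inner_apply, EuclideanSpace.single_apply]
      rw [hsingle]
      split_ifs with hc
      · have hone : ρ ω ^ (1 - pr/2) * w' ω = 1 := by
          rw [hw'def]
          simp only
          rw [← Real.rpow_add (hρpos ω)]
          norm_num
        calc G ω * ρ ω ^ (1 - pr/2) * (w' ω * F ω i)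
            = (ρ ω ^ (1 - pr/2) * w' ω) * (F ω i * G ω) := by ring
          _ = F ω i * G ω := by rw [hone, one_mul]
      · rw [zero_mul]
    have hsplit : ∀ F : Ω → ℝ, AEStronglyMeasurable F μ → (∀ᵐ ω ∂μ, |F ω| ≤ |Z ω|) → ∀ M : ℕ,
        |(∫ ω, F ω * G ω ∂μ) -
            ∫ ω, (if |G ω| ≤ (M:ℝ) ∧ ρ ω ≤ (M:ℝ) then F ω * G ω else 0) ∂μ|
          ≤ ∫ ω, (if |G ω| ≤ (M:ℝ) ∧ ρ ω ≤ (M:ℝ) then (0:ℝ) else ρ ω * |G ω|) ∂μ := by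
      intro F hFsm hFbd M
      have hFGbd : ∀ᵐ ω ∂μ, ‖F ω * G ω‖ ≤ ρ ω * |G ω| := by
        filter_upwards [hFbd] with ω h
        rw [Real.norm_eq_abs, abs_mul]
        exact mul_le_mul_of_nonneg_right (h.trans (hZρ ω)) (abs_nonneg _)
      have hFG : Integrable (fun ω => F ω * G ω) μ :=
        hρG.mono' (hFsm.mul hGm.aestronglyMeasurable) hFGbd
      have hIte : Integrable
          (fun ω => if |G ω| ≤ (M:ℝ) ∧ ρ ω ≤ (M:ℝ) then F ω * G ω else 0) μ := by
        refine (hFG.indicator (hSmeas M)).congr (Eventually.of_forall fun ω => ?_)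
        by_cases hc : |G ω| ≤ (M:ℝ) ∧ ρ ω ≤ (M:ℝ) <;>
          simp [Set.indicator_apply, Set.mem_setOf_eq, hc]
      have hIte2 : Integrable
          (fun ω => if |G ω| ≤ (M:ℝ) ∧ ρ ω ≤ (M:ℝ) then (0:ℝ) else F ω * G ω) μ := by
        refine (hFG.sub hIte).congr (Eventually.of_forall fun ω => ?_)
        by_cases hc : |G ω| ≤ (M:ℝ) ∧ ρ ω ≤ (M:ℝ) <;> simp [hc]
      have hdiff : (∫ ω, F ω * G ω ∂μ) -
          (∫ ω, (if |G ω| ≤ (M:ℝ) ∧ ρ ω ≤ (M:ℝ) then F ω * G ω else 0) ∂μ)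
          = ∫ ω, (if |G ω| ≤ (M:ℝ) ∧ ρ ω ≤ (M:ℝ) then (0:ℝ) else F ω * G ω) ∂μ := by
        rw [← integral_sub hFG hIte]
        apply integral_congr_ae
        refine Eventually.of_forall fun ω => ?_
        by_cases hc : |G ω| ≤ (M:ℝ) ∧ ρ ω ≤ (M:ℝ) <;> simp [hc]
      rw [hdiff]
      have habs : |∫ ω, (if |G ω| ≤ (M:ℝ) ∧ ρ ω ≤ (M:ℝ) then (0:ℝ) else F ω * G ω) ∂μ|
          ≤ ∫ ω, ‖(if |G ω| ≤ (M:ℝ) ∧ ρ ω ≤ (M:ℝ) then (0:ℝ) else F ω * G ω)‖ ∂μ := by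
        rw [← Real.norm_eq_abs]
        exact norm_integral_le_integral_norm _
      refine habs.trans ?_
      refine integral_mono_ae hIte2.norm (hbadint M) ?_
      filter_upwards [hFbd] with ω h
      simp only [Real.norm_eq_abs]
      split
      · simp
      · rw [abs_mul]
        exact mul_le_mul_of_nonneg_right (h.trans (hZρ ω)) (abs_nonneg _)
    rw [Metric.tendsto_atTop]
    intro ε hε
    obtain ⟨M, hM⟩ := (he0.eventually_lt_const (show (0:ℝ) < ε/3 by positivity)).exists
    have hWc := hweak (W M)
    rw [Metric.tendsto_atTop] at hWc
    obtain ⟨N, hN⟩ := hWc (ε/3) (by positivity)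
    refine ⟨N, fun n hn => ?_⟩
    have hη₀bd' : ∀ᵐ ω ∂μ, |η₀ ω i| ≤ |Z ω| := by
      filter_upwards [hη₀bd] with ω h; exact h i
    have hηbd' : ∀ᵐ ω ∂μ, |η (φ n) ω i| ≤ |Z ω| := by
      filter_upwards [hgood] with ω h; exact (h (φ n)).2.1 i
    have h1 := hsplit (fun ω => η (φ n) ω i) (hηcoord (φ n) i).aestronglyMeasurable hηbd' M
    have h2 := hsplit (fun ω => η₀ ω i) (hη₀coord i) hη₀bd' M
    have h3 := hN n hn
    rw [Real.dist_eq] at h3 ⊢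
    have hi1 := hinner (Θ (φ n)) (η (φ n)) ((hΘf2 (φ n)).coeFn_toLp) M
    have hi2 := hinner Θ₀ η₀ (Eventually.of_forall hΘ₀eq) M
    rw [hi1, hi2] at h3
    set A := ∫ ω, η (φ n) ω i * G ω ∂μ with hA
    set A' := ∫ ω, (if |G ω| ≤ (M:ℝ) ∧ ρ ω ≤ (M:ℝ) then η (φ n) ω i * G ω else 0) ∂μ with hA'
    set Bq := ∫ ω, η₀ ω i * G ω ∂μ with hB
    set B' := ∫ ω, (if |G ω| ≤ (M:ℝ) ∧ ρ ω ≤ (M:ℝ) then η₀ ω i * G ω else 0) ∂μ with hB'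
    have key : |A - Bq| ≤ |A - A'| + |A' - B'| + |B' - Bq| := by
      have e1 : A - Bq = (A - A') + (A' - B') + (B' - Bq) := by ring
      rw [e1]
      exact (abs_add_le _ _).trans (add_le_add_left (abs_add_le _ _) _)
    rw [abs_sub_comm B' Bq] at key
    linarith
  -- conclusion
  refine ⟨η₀, hη₀mem, hη₀X, fun i => ?_⟩
  have hmemseq : ∀ n, MemLp (fun ω => η (φ n) ω i + x₀ i) p μ :=
    fun n => (memℒp_coord (hηmem (φ n)) i).add (memLp_const _)
  have hmem₀ : MemLp (fun ω => η₀ ω i + x₀ i) p μ :=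
    (memℒp_coord hη₀mem i).add (memLp_const _)
  have htest : ∀ g : Ω → ℝ, MemLp g q μ →
      Tendsto (fun n => ∫ ω, (η (φ n) ω i + x₀ i) * g ω ∂μ) atTop
        (𝓝 (∫ ω, (η₀ ω i + x₀ i) * g ω ∂μ)) := by
    intro g hg
    have hgint : Integrable g μ := hg.integrable hq1
    have hexp : ∀ F : Ω → ℝ, MemLp F p μ →
        (∫ ω, (F ω + x₀ i) * g ω ∂μ) = (∫ ω, F ω * g ω ∂μ) + x₀ i * ∫ ω, g ω ∂μ := by
      intro F hF
      have hfe : (fun ω => (F ω + x₀ i) * g ω) = fun ω => F ω * g ω + x₀ i * g ω := by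
        funext ω; ring
      rw [hfe, integral_add (hmulInt F g hF hg) (hgint.const_mul _), integral_const_mul]
    have heq1 : (fun n => ∫ ω, (η (φ n) ω i + x₀ i) * g ω ∂μ)
        = fun n => (∫ ω, η (φ n) ω i * g ω ∂μ) + x₀ i * ∫ ω, g ω ∂μ :=
      funext fun n => hexp _ (memℒp_coord (hηmem (φ n)) i)
    rw [heq1, hexp _ (memℒp_coord hη₀mem i)]
    exact (hpair g hg i).add_const _
  have hlsc_app := hlsc i (fun n => fun ω => η (φ n) ω i + x₀ i)
    (fun ω => η₀ ω i + x₀ i) hmemseq hmem₀ htest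
  refine hlsc_app.trans ?_
  have hub : ∀ n, r i (fun ω => η (φ n) ω i + x₀ i) ≤ ((x (φ n) i - x₀ i : ℝ) : EReal) := by
    intro n
    have hmem1 : MemLp (fun ω => η (φ n) ω i + x (φ n) i) p μ :=
      (memℒp_coord (hηmem (φ n)) i).add (memLp_const _)
    have hmemξ : MemLp (fun ω => ξ (φ n) ω i + x (φ n) i) p μ :=
      (memℒp_coord (hξmem (φ n)) i).add (memLp_const _)
    have h0 : r i (fun ω => η (φ n) ω i + x (φ n) i) ≤ 0 := by
      refine le_trans ((hr i).mono _ _ hmemξ hmem1 ?_) (hξr (φ n) i)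
      filter_upwards [hgood] with ω h
      exact add_le_add_left ((h (φ n)).2.2 i) _
    have hc := (hr i).cash (fun ω => η (φ n) ω i + x (φ n) i) hmem1 (x₀ i - x (φ n) i)
    have hfeq : (fun ω => (η (φ n) ω i + x (φ n) i) + (x₀ i - x (φ n) i))
        = fun ω => η (φ n) ω i + x₀ i := funext fun ω => by ring
    rw [hfeq] at hc
    rw [hc]
    have hstep : r i (fun ω => η (φ n) ω i + x (φ n) i) - ((x₀ i - x (φ n) i : ℝ) : EReal)
        ≤ 0 - ((x₀ i - x (φ n) i : ℝ) : EReal) := by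
      rw [sub_eq_add_neg, sub_eq_add_neg]
      exact add_le_add_left h0 _
    refine hstep.trans ?_
    rw [zero_sub, ← EReal.coe_neg, neg_sub]
  have hxc : Tendsto (fun n => ((x (φ n) i - x₀ i : ℝ) : EReal)) atTop (𝓝 ((0:ℝ) : EReal)) := by
    apply EReal.tendsto_coe.2
    have h1 : Tendsto (fun n => x n i) atTop (𝓝 (x₀ i)) :=
      ((PiLp.continuous_apply 2 _ i).tendsto x₀).comp hxlim
    have h2 : Tendsto (fun n => x (φ n) i) atTop (𝓝 (x₀ i)) := h1.comp hφ.tendsto_atTop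
    simpa using h2.sub_const (x₀ i)
  calc liminf (fun n => r i (fun ω => η (φ n) ω i + x₀ i)) atTop
      ≤ liminf (fun n => ((x (φ n) i - x₀ i : ℝ) : EReal)) atTop :=
        liminf_le_liminf (Eventually.of_forall hub)
    _ = ((0:ℝ) : EReal) := hxc.liminf_eq
    _ = 0 := by norm_num
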